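/- arXiv:2207.04686 — 2 statements merged into one kernel-verified Lean document; each statement's English description precedes it below -/
import Mathlib

section
/- Let x_j, …, x_{T−1} ∈ ℝ^d be i.i.d. random vectors with E[x xᵀ] = H, smallest eigenvalue λ_min(H) = μ > 0, and E[‖x‖₂² x xᵀ] ⪯ R_x²·H. Let B_t = I − η·x_t x_tᵀ and let z ∈ ℝ^d be a random vector independent of all B_t. Then for any stepsize η < 1/R_x²: E[‖B_{T−1}·B_{T−2}⋯B_j·z‖²] ≤ (1 − ημ)^{T−j}·E[‖z‖²] ≤ e^{−ημ(T−j)}·E[‖z‖²]. -/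
set_option autoImplicit false


open MeasureTheory ProbabilityTheory Real Matrix
open scoped ENNReal NNReal RealInnerProductSpace BigOperators

noncomputable section

abbrev Vec (d : ℕ) : Type := EuclideanSpace ℝ (Fin d)

/-- The smallest eigenvalue of a Hermitian matrix. -/
def lamMin {n : ℕ} {A : Matrix (Fin n) (Fin n) ℝ} (hA : A.IsHermitian) : ℝ :=
  ⨅ i, hA.eigenvalues i

/-- Action of the matrix `I − η x xᵀ` on a vector `v`. -/
def Bapp {d : ℕ} (η : ℝ) (x v : Vec d) : Vec d := v - η • (⟪x, v⟫ • x)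

/-- `chainB η x j z k = B_{j+k-1} ⋯ B_{j+1} B_j z` where `B_t = I − η x_t x_tᵀ`. -/
def chainB {d : ℕ} (η : ℝ) (x : ℕ → Vec d) (j : ℕ) (z : Vec d) : ℕ → Vec d
  | 0 => z
  | k + 1 => Bapp η (x (j + k)) (chainB η x j z k)

/-- Extension of a `Fin N`-indexed family to `ℕ` by zero. -/
def ext0 {β : Type*} [Zero β] {N : ℕ} (f : Fin N → β) : ℕ → β :=
  fun t => if h : t < N then f ⟨t, h⟩ else 0


section aux
variable {d : ℕ}

lemma inner_eq_sum (x v : Vec d) : ⟪x, v⟫ = ∑ i, x i * v i := by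
  simp [PiLp.inner_apply, RCLike.inner_apply, conj_trivial]
  exact Finset.sum_congr rfl fun i _ => mul_comm _ _

lemma norm_sq_eq_sum (x : Vec d) : ‖x‖ ^ 2 = ∑ i, x i ^ 2 := by
  rw [← real_inner_self_eq_norm_sq, inner_eq_sum]
  simp [sq]

lemma coord_sq_le (x : Vec d) (i : Fin d) : x i ^ 2 ≤ ‖x‖ ^ 2 := by
  rw [norm_sq_eq_sum]
  exact Finset.single_le_sum (fun k _ => sq_nonneg (x k)) (Finset.mem_univ i)

lemma abs_coord_mul_le (x : Vec d) (i k : Fin d) : |x i * x k| ≤ ‖x‖ ^ 2 := by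
  have h1 : |x i * x k| ≤ (x i ^2 + x k ^2) / 2 := by
    rw [abs_mul]; nlinarith [sq_nonneg (|x i| - |x k|), sq_abs (x i), sq_abs (x k), abs_nonneg (x i), abs_nonneg (x k)]
  nlinarith [coord_sq_le x i, coord_sq_le x k]

lemma norm_Bapp_le (η : ℝ) (hη : 0 ≤ η) (x v : Vec d) :
    ‖Bapp η x v‖ ≤ (1 + η * ‖x‖ ^ 2) * ‖v‖ := by
  have h := norm_sub_le v (η • (⟪x, v⟫ • x))
  have h2 : ‖η • (⟪x, v⟫ • x)‖ = η * (|⟪x, v⟫| * ‖x‖) := by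
    rw [norm_smul, norm_smul]; simp [abs_of_nonneg hη, Real.norm_eq_abs]
  have h3 : |⟪x, v⟫| ≤ ‖x‖ * ‖v‖ := abs_real_inner_le_norm x v
  calc ‖Bapp η x v‖ ≤ ‖v‖ + η * (|⟪x, v⟫| * ‖x‖) := by rw [Bapp] at *; rw [← h2]; exact h
  _ ≤ ‖v‖ + η * (‖x‖ * ‖v‖ * ‖x‖) := by
      gcongr
  _ = (1 + η * ‖x‖ ^ 2) * ‖v‖ := by ring

lemma norm_Bapp_sq_expand (η : ℝ) (x v : Vec d) :
    ‖Bapp η x v‖ ^ 2 = ‖v‖ ^ 2 - 2 * η * ⟪x, v⟫ ^ 2 + η ^ 2 * (‖x‖ ^ 2 * ⟪x, v⟫ ^ 2) := by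
  have : Bapp η x v = v - (η * ⟪x, v⟫) • x := by rw [Bapp, smul_smul]
  rw [this, ← real_inner_self_eq_norm_sq, inner_sub_sub_self]
  rw [real_inner_smul_left, real_inner_smul_right, real_inner_smul_left, real_inner_smul_right]
  rw [real_inner_self_eq_norm_sq, real_inner_self_eq_norm_sq, real_inner_comm v x]
  ring

end aux

section spectral
variable {d : ℕ}

def mulVecE {d : ℕ} (A : Matrix (Fin d) (Fin d) ℝ) (y : Vec d) : Vec d := WithLp.toLp 2 (A *ᵥ y)

lemma inner_mulVec_symm {A : Matrix (Fin d) (Fin d) ℝ} (hA : A.IsHermitian)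
    (x y : Vec d) : ⟪x, mulVecE A y⟫ = ⟪mulVecE A x, y⟫ := by
  have hsymm : ∀ i k, A i k = A k i := fun i k => by
    have := congrFun (congrFun hA.eq i) k
    simpa [conjTranspose_apply] using this.symm
  rw [inner_eq_sum, inner_eq_sum]
  simp only [mulVecE, mulVec, dotProduct]
  simp only [Finset.mul_sum, Finset.sum_mul]
  rw [Finset.sum_comm]
  refine Finset.sum_congr rfl fun i _ => Finset.sum_congr rfl fun k _ => ?_
  rw [hsymm k i]; ring

lemma eigen_lower_bound (hd : 0 < d) {A : Matrix (Fin d) (Fin d) ℝ} (hA : A.IsHermitian)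
    (v : Vec d) : lamMin hA * ‖v‖ ^ 2 ≤ ⟪v, mulVecE A v⟫ := by
  haveI : Nonempty (Fin d) := ⟨⟨0, hd⟩⟩
  set B := hA.eigenvectorBasis with hB
  have hbdd : BddBelow (Set.range hA.eigenvalues) := Set.Finite.bddBelow (Set.finite_range _)
  have hmin : ∀ i, lamMin hA ≤ hA.eigenvalues i := fun i => ciInf_le hbdd i
  have hparseval : ‖v‖ ^ 2 = ∑ i, ⟪B i, v⟫ ^ 2 := by
    rw [← real_inner_self_eq_norm_sq, ← B.sum_inner_mul_inner v v]
    apply Finset.sum_congr rfl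
    intro i _
    rw [real_inner_comm v (B i), sq]
  have hexp : ⟪v, mulVecE A v⟫ = ∑ i, hA.eigenvalues i * ⟪B i, v⟫ ^ 2 := by
    rw [← B.sum_inner_mul_inner v (mulVecE A v)]
    apply Finset.sum_congr rfl
    intro i _
    have h1 : ⟪B i, mulVecE A v⟫ = ⟪mulVecE A (B i), v⟫ := inner_mulVec_symm hA _ _
    have h2 : mulVecE A (B i) = hA.eigenvalues i • (B i) := by
      show WithLp.toLp 2 (A *ᵥ (hA.eigenvectorBasis i).ofLp) = _
      rw [hA.mulVec_eigenvectorBasis i]; rfl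
    rw [h1, h2, real_inner_smul_left, real_inner_comm v (B i)]
    ring
  rw [hexp, hparseval, Finset.mul_sum]
  apply Finset.sum_le_sum
  intro i _
  have := hmin i
  nlinarith [sq_nonneg (⟪B i, v⟫)]

end spectral

section integrals
variable {d : ℕ} (ν : Measure (Vec d)) [IsProbabilityMeasure ν]

lemma meas_coord (i : Fin d) : Continuous (fun x : Vec d => x i) :=
  (EuclideanSpace.proj (𝕜 := ℝ) i).continuous

lemma integrable_coord_mul (hmom : Integrable (fun x : Vec d => ‖x‖ ^ 2) ν) (i k : Fin d) :
    Integrable (fun x : Vec d => x i * x k) ν := by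
  refine Integrable.mono' hmom (((meas_coord i).mul (meas_coord k)).aestronglyMeasurable) ?_
  filter_upwards with x
  rw [Real.norm_eq_abs]
  exact abs_coord_mul_le x i k

lemma integrable_normsq_coord_mul (hmom4 : Integrable (fun x : Vec d => ‖x‖ ^ 4) ν) (i k : Fin d) :
    Integrable (fun x : Vec d => ‖x‖ ^ 2 * (x i * x k)) ν := by
  refine Integrable.mono' hmom4 ((continuous_norm.pow 2).mul
    ((meas_coord i).mul (meas_coord k))).aestronglyMeasurable ?_
  filter_upwards with x
  have h := abs_coord_mul_le x i k
  have hn : (0:ℝ) ≤ ‖x‖ ^ 2 := sq_nonneg _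
  rw [Real.norm_eq_abs, abs_mul, abs_of_nonneg hn]
  calc ‖x‖ ^ 2 * |x i * x k| ≤ ‖x‖ ^ 2 * ‖x‖ ^ 2 := by gcongr
  _ = ‖x‖ ^ 4 := by ring

lemma inner_sq_expand (v x : Vec d) :
    ⟪x, v⟫ ^ 2 = ∑ i, ∑ k, v i * v k * (x i * x k) := by
  rw [inner_eq_sum, sq, Finset.sum_mul_sum]
  refine Finset.sum_congr rfl fun i _ => Finset.sum_congr rfl fun k _ => by ring

lemma integrable_inner_sq (hmom : Integrable (fun x : Vec d => ‖x‖ ^ 2) ν) (v : Vec d) :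
    Integrable (fun x : Vec d => ⟪x, v⟫ ^ 2) ν := by
  refine Integrable.mono' (hmom.const_mul (‖v‖^2)) ?_ ?_
  · exact (Continuous.pow (continuous_id.inner continuous_const) 2).aestronglyMeasurable
  · filter_upwards with x
    have h := abs_real_inner_le_norm x v
    rw [Real.norm_eq_abs, abs_of_nonneg (sq_nonneg _)]
    have h2 : ⟪x, v⟫ ^ 2 ≤ (‖x‖ * ‖v‖) ^ 2 := by
      rw [← sq_abs]
      exact pow_le_pow_left₀ (abs_nonneg _) h 2
    calc ⟪x, v⟫ ^ 2 ≤ (‖x‖ * ‖v‖) ^ 2 := h2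
    _ = ‖v‖ ^ 2 * ‖x‖ ^ 2 := by ring

lemma integrable_normsq_inner_sq (hmom4 : Integrable (fun x : Vec d => ‖x‖ ^ 4) ν) (v : Vec d) :
    Integrable (fun x : Vec d => ‖x‖ ^ 2 * ⟪x, v⟫ ^ 2) ν := by
  refine Integrable.mono' (hmom4.const_mul (‖v‖^2)) ?_ ?_
  · exact ((continuous_norm.pow 2).mul
      (Continuous.pow (continuous_id.inner continuous_const) 2)).aestronglyMeasurable
  · filter_upwards with x
    have h := abs_real_inner_le_norm x v
    have h2 : ⟪x, v⟫ ^ 2 ≤ (‖x‖ * ‖v‖) ^ 2 := by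
      rw [← sq_abs]
      exact pow_le_pow_left₀ (abs_nonneg _) h 2
    rw [Real.norm_eq_abs, abs_of_nonneg (mul_nonneg (sq_nonneg _) (sq_nonneg _))]
    calc ‖x‖ ^ 2 * ⟪x, v⟫ ^ 2 ≤ ‖x‖ ^ 2 * (‖x‖ * ‖v‖) ^ 2 := by
          exact mul_le_mul_of_nonneg_left h2 (sq_nonneg _)
    _ = ‖v‖ ^ 2 * ‖x‖ ^ 4 := by ring

lemma Hquad (hmom : Integrable (fun x : Vec d => ‖x‖ ^ 2) ν)
    (H : Matrix (Fin d) (Fin d) ℝ) (hH : ∀ i k, H i k = ∫ x, x i * x k ∂ν) (v : Vec d) :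
    ∫ x, ⟪x, v⟫ ^ 2 ∂ν = ⟪v, mulVecE H v⟫ := by
  have hint : ∀ i k : Fin d, Integrable (fun x : Vec d => v i * v k * (x i * x k)) ν :=
    fun i k => (integrable_coord_mul ν hmom i k).const_mul _
  calc ∫ x, ⟪x, v⟫ ^ 2 ∂ν = ∫ x, ∑ i, ∑ k, v i * v k * (x i * x k) ∂ν := by
        refine integral_congr_ae (Filter.Eventually.of_forall fun x => ?_)
        exact inner_sq_expand v x
  _ = ∑ i, ∑ k, ∫ x, v i * v k * (x i * x k) ∂ν := by
        rw [integral_finset_sum _ (fun i _ => integrable_finset_sum _ (fun k _ => hint i k))]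
        exact Finset.sum_congr rfl fun i _ => integral_finset_sum _ (fun k _ => hint i k)
  _ = ∑ i, ∑ k, v i * v k * H i k := by
        refine Finset.sum_congr rfl fun i _ => Finset.sum_congr rfl fun k _ => ?_
        rw [hH i k, integral_const_mul]
  _ = ⟪v, mulVecE H v⟫ := by
        rw [inner_eq_sum]
        simp only [mulVecE, mulVec, dotProduct, Finset.mul_sum]
        refine Finset.sum_congr rfl fun i _ => Finset.sum_congr rfl fun k _ => by ring

lemma M4quad (hmom4 : Integrable (fun x : Vec d => ‖x‖ ^ 4) ν)
    (M4 : Matrix (Fin d) (Fin d) ℝ)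
    (hM4 : ∀ i k, M4 i k = ∫ x, ‖x‖ ^ 2 * (x i * x k) ∂ν) (v : Vec d) :
    ∫ x, ‖x‖ ^ 2 * ⟪x, v⟫ ^ 2 ∂ν = ⟪v, mulVecE M4 v⟫ := by
  have hint : ∀ i k : Fin d, Integrable (fun x : Vec d => v i * v k * (‖x‖ ^ 2 * (x i * x k))) ν :=
    fun i k => (integrable_normsq_coord_mul ν hmom4 i k).const_mul _
  calc ∫ x, ‖x‖ ^ 2 * ⟪x, v⟫ ^ 2 ∂ν
      = ∫ x, ∑ i, ∑ k, v i * v k * (‖x‖ ^ 2 * (x i * x k)) ∂ν := by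
        refine integral_congr_ae (Filter.Eventually.of_forall fun x => ?_)
        show ‖x‖ ^ 2 * ⟪x, v⟫ ^ 2 = _
        rw [inner_sq_expand v x, Finset.mul_sum]
        refine Finset.sum_congr rfl fun i _ => ?_
        rw [Finset.mul_sum]
        refine Finset.sum_congr rfl fun k _ => by ring
  _ = ∑ i, ∑ k, ∫ x, v i * v k * (‖x‖ ^ 2 * (x i * x k)) ∂ν := by
        rw [integral_finset_sum _ (fun i _ => integrable_finset_sum _ (fun k _ => hint i k))]
        exact Finset.sum_congr rfl fun i _ => integral_finset_sum _ (fun k _ => hint i k)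
  _ = ∑ i, ∑ k, v i * v k * M4 i k := by
        refine Finset.sum_congr rfl fun i _ => Finset.sum_congr rfl fun k _ => ?_
        rw [hM4 i k, integral_const_mul]
  _ = ⟪v, mulVecE M4 v⟫ := by
        rw [inner_eq_sum]
        simp only [mulVecE, mulVec, dotProduct, Finset.mul_sum]
        refine Finset.sum_congr rfl fun i _ => Finset.sum_congr rfl fun k _ => by ring

end integrals

section onestep
variable {d : ℕ}

lemma inner_mulVecE_dot (A : Matrix (Fin d) (Fin d) ℝ) (v : Vec d) :
    ⟪v, mulVecE A v⟫ = (v : Fin d → ℝ) ⬝ᵥ (A *ᵥ (v : Fin d → ℝ)) := by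
  rw [inner_eq_sum]; rfl

lemma psd_quad_le {H M4 : Matrix (Fin d) (Fin d) ℝ} {Rx : ℝ}
    (hRx : (Rx ^ 2 • H - M4).PosSemidef) (v : Vec d) :
    ⟪v, mulVecE M4 v⟫ ≤ Rx ^ 2 * ⟪v, mulVecE H v⟫ := by
  have h := hRx.dotProduct_mulVec_nonneg v.ofLp
  simp only [star_trivial, RCLike.re_to_real] at h
  rw [sub_mulVec, smul_mulVec, dotProduct_sub, dotProduct_smul, smul_eq_mul] at h
  rw [inner_mulVecE_dot, inner_mulVecE_dot]
  linarith

variable (ν : Measure (Vec d)) [IsProbabilityMeasure ν]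
variable (hmom : Integrable (fun x : Vec d => ‖x‖ ^ 2) ν)
variable (hmom4 : Integrable (fun x : Vec d => ‖x‖ ^ 4) ν)
variable {H M4 : Matrix (Fin d) (Fin d) ℝ}
variable (hH : ∀ i k, H i k = ∫ x, x i * x k ∂ν)
variable (hM4 : ∀ i k, M4 i k = ∫ x, ‖x‖ ^ 2 * (x i * x k) ∂ν)
variable (hHherm : H.IsHermitian) {μ : ℝ} (hμdef : μ = lamMin hHherm) (hμ : 0 < μ)
variable {Rx : ℝ} (hRx : (Rx ^ 2 • H - M4).PosSemidef)
variable {η : ℝ} (hη0 : 0 < η) (hη : η < 1 / Rx ^ 2)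

include hη0 hη in
lemma Rx_sq_pos : 0 < Rx ^ 2 := by
  rcases lt_or_eq_of_le (sq_nonneg Rx) with h | h
  · exact h
  · exfalso; rw [← h, div_zero] at hη; linarith

include hη0 hη in
lemma eta_Rx_lt_one : η * Rx ^ 2 < 1 := by
  have h := Rx_sq_pos (Rx:=Rx) hη0 hη
  exact (lt_div_iff₀ h).mp hη

include hmom hmom4 hH hM4 hμdef hμ hRx hη0 hη in
lemma mu_le_Rx_sq (hd : 0 < d) : μ ≤ Rx ^ 2 := by
  haveI : Nonempty (Fin d) := ⟨⟨0, hd⟩⟩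
  obtain ⟨i0, hi0⟩ := Finite.exists_min hHherm.eigenvalues
  have hbdd : BddBelow (Set.range hHherm.eigenvalues) := Set.Finite.bddBelow (Set.finite_range _)
  have hμi0 : μ = hHherm.eigenvalues i0 := by
    rw [hμdef, lamMin]
    exact le_antisymm (ciInf_le hbdd i0) (le_ciInf hi0)
  set u : Vec d := hHherm.eigenvectorBasis i0 with hu
  have hnormu : ‖u‖ = 1 := hHherm.eigenvectorBasis.orthonormal.1 i0
  have hQ : ∫ x, ⟪x, u⟫ ^ 2 ∂ν = μ := by
    rw [Hquad ν hmom H hH u]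
    have h2 : mulVecE H u = μ • u := by
      rw [hμi0]
      show WithLp.toLp 2 (H *ᵥ (hHherm.eigenvectorBasis i0).ofLp) = _
      rw [hHherm.mulVec_eigenvectorBasis i0]; rfl
    rw [h2, real_inner_smul_right, real_inner_self_eq_norm_sq, hnormu]
    ring
  have hQ4 : ∫ x, ‖x‖ ^ 2 * ⟪x, u⟫ ^ 2 ∂ν ≤ Rx ^ 2 * μ := by
    rw [M4quad ν hmom4 M4 hM4 u]
    calc ⟪u, mulVecE M4 u⟫ ≤ Rx ^ 2 * ⟪u, mulVecE H u⟫ := psd_quad_le hRx u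
    _ = Rx ^ 2 * μ := by rw [← Hquad ν hmom H hH u, hQ]
  -- pointwise bound  ⟪x,u⟫² ≤ ‖x‖²
  have hptw : ∀ x : Vec d, ⟪x, u⟫ ^ 2 ≤ ‖x‖ ^ 2 := fun x => by
    have h := abs_real_inner_le_norm x u
    rw [hnormu, mul_one] at h
    calc ⟪x, u⟫ ^ 2 = |⟪x, u⟫| ^ 2 := (sq_abs _).symm
    _ ≤ ‖x‖ ^ 2 := by exact pow_le_pow_left₀ (abs_nonneg _) h 2
  have hint1 : Integrable (fun x : Vec d => ⟪x, u⟫ ^ 2) ν := integrable_inner_sq ν hmom u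
  have hint2 : Integrable (fun x : Vec d => ⟪x, u⟫ ^ 4) ν := by
    refine Integrable.mono' hmom4
      ((Continuous.pow (continuous_id.inner continuous_const) 4)).aestronglyMeasurable ?_
    filter_upwards with x
    rw [Real.norm_eq_abs, abs_of_nonneg (by positivity)]
    calc ⟪x, u⟫ ^ 4 = (⟪x, u⟫ ^ 2) ^ 2 := by ring
    _ ≤ (‖x‖ ^ 2) ^ 2 := by exact pow_le_pow_left₀ (sq_nonneg _) (hptw x) 2
    _ = ‖x‖ ^ 4 := by ring
  have hint3 : Integrable (fun x : Vec d => ‖x‖ ^ 2 * ⟪x, u⟫ ^ 2) ν :=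
    integrable_normsq_inner_sq ν hmom4 u
  -- Jensen : μ² ≤ ∫ ⟪x,u⟫⁴
  have hjensen : μ ^ 2 ≤ ∫ x, ⟪x, u⟫ ^ 4 ∂ν := by
    have hnn : 0 ≤ ∫ x, (⟪x, u⟫ ^ 2 - μ) ^ 2 ∂ν :=
      integral_nonneg fun x => sq_nonneg _
    have hexp : ∫ x, (⟪x, u⟫ ^ 2 - μ) ^ 2 ∂ν
        = (∫ x, ⟪x, u⟫ ^ 4 ∂ν) - 2 * μ * (∫ x, ⟪x, u⟫ ^ 2 ∂ν) + μ ^ 2 := by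
      have heq : (fun x : Vec d => (⟪x, u⟫ ^ 2 - μ) ^ 2)
          = fun x => ⟪x, u⟫ ^ 4 - 2 * μ * ⟪x, u⟫ ^ 2 + μ ^ 2 := by
        funext x; ring
      have hf : Integrable (fun x : Vec d => ⟪x, u⟫ ^ 4 - 2 * μ * ⟪x, u⟫ ^ 2) ν :=
        hint2.sub (hint1.const_mul _)
      have hg : Integrable (fun x : Vec d => 2 * μ * ⟪x, u⟫ ^ 2) ν := hint1.const_mul _
      rw [heq, integral_add hf (integrable_const _), integral_sub hint2 hg,
        integral_const_mul, integral_const]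
      simp [measure_univ]
    rw [hexp, hQ] at hnn
    nlinarith
  have hmono : ∫ x, ⟪x, u⟫ ^ 4 ∂ν ≤ ∫ x, ‖x‖ ^ 2 * ⟪x, u⟫ ^ 2 ∂ν := by
    refine integral_mono hint2 hint3 fun x => ?_
    calc ⟪x, u⟫ ^ 4 = ⟪x, u⟫ ^ 2 * ⟪x, u⟫ ^ 2 := by ring
    _ ≤ ‖x‖ ^ 2 * ⟪x, u⟫ ^ 2 := mul_le_mul_of_nonneg_right (hptw x) (sq_nonneg _)
  nlinarith

include hmom hmom4 hH hM4 hμdef hμ hRx hη0 hη in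
lemma eta_mu_lt_one (hd : 0 < d) : η * μ < 1 := by
  have h1 := mu_le_Rx_sq ν hmom hmom4 hH hM4 hHherm hμdef hμ hRx hη0 hη hd
  have h2 := eta_Rx_lt_one (Rx := Rx) hη0 hη
  nlinarith

include hmom hmom4 in
lemma integrable_Bapp_sq (v : Vec d) :
    Integrable (fun x : Vec d => ‖Bapp η x v‖ ^ 2) ν := by
  have heq : (fun x : Vec d => ‖v‖ ^ 2 - 2 * η * ⟪x, v⟫ ^ 2 + η ^ 2 * (‖x‖ ^ 2 * ⟪x, v⟫ ^ 2))
      = fun x : Vec d => ‖Bapp η x v‖ ^ 2 := by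
    funext x; rw [norm_Bapp_sq_expand]
  exact heq ▸ (((integrable_const _).sub ((integrable_inner_sq ν hmom v).const_mul _)).add
    ((integrable_normsq_inner_sq ν hmom4 v).const_mul _))

include hmom hmom4 hH hM4 hμdef hRx hη0 hη in
lemma one_step (hd : 0 < d) (v : Vec d) :
    ∫ x, ‖Bapp η x v‖ ^ 2 ∂ν ≤ (1 - η * μ) * ‖v‖ ^ 2 := by
  have hint1 := integrable_inner_sq ν hmom v
  have hint3 := integrable_normsq_inner_sq ν hmom4 v
  have hcalc : ∫ x, ‖Bapp η x v‖ ^ 2 ∂ν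
      = ‖v‖ ^ 2 - 2 * η * (∫ x, ⟪x, v⟫ ^ 2 ∂ν) + η ^ 2 * (∫ x, ‖x‖ ^ 2 * ⟪x, v⟫ ^ 2 ∂ν) := by
    have heq : (fun x : Vec d => ‖Bapp η x v‖ ^ 2)
        = fun x : Vec d => ‖v‖ ^ 2 - 2 * η * ⟪x, v⟫ ^ 2 + η ^ 2 * (‖x‖ ^ 2 * ⟪x, v⟫ ^ 2) := by
      funext x; rw [norm_Bapp_sq_expand]
    have hf : Integrable (fun x : Vec d => ‖v‖ ^ 2 - 2 * η * ⟪x, v⟫ ^ 2) ν :=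
      (integrable_const _).sub (hint1.const_mul _)
    have hg : Integrable (fun x : Vec d => η ^ 2 * (‖x‖ ^ 2 * ⟪x, v⟫ ^ 2)) ν :=
      hint3.const_mul _
    have hh : Integrable (fun x : Vec d => 2 * η * ⟪x, v⟫ ^ 2) ν := hint1.const_mul _
    rw [heq, integral_add hf hg, integral_sub (integrable_const _) hh, integral_const_mul,
      integral_const_mul, integral_const]
    simp [measure_univ]
  set Q := ∫ x, ⟪x, v⟫ ^ 2 ∂ν with hQdef
  have hQμ : μ * ‖v‖ ^ 2 ≤ Q := by
    rw [hQdef, Hquad ν hmom H hH v, hμdef]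
    exact eigen_lower_bound hd hHherm v
  have hQnn : 0 ≤ Q := integral_nonneg fun x => sq_nonneg _
  set Q4 := ∫ x, ‖x‖ ^ 2 * ⟪x, v⟫ ^ 2 ∂ν with hQ4def
  have hQ4 : Q4 ≤ Rx ^ 2 * Q := by
    rw [hQ4def, hQdef, M4quad ν hmom4 M4 hM4 v, Hquad ν hmom H hH v]
    exact psd_quad_le hRx v
  have hc : η * Rx ^ 2 < 1 := eta_Rx_lt_one (Rx := Rx) hη0 hη
  rw [hcalc]
  nlinarith [mul_le_mul_of_nonneg_left hQ4 (sq_nonneg η),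
    mul_le_mul_of_nonneg_right (mul_le_mul_of_nonneg_right hc.le hη0.le) hQnn,
    mul_le_mul_of_nonneg_left hQμ hη0.le]

end onestep

section chain

variable {d : ℕ}

lemma chainB_congr (η : ℝ) (x y : ℕ → Vec d) (j k : ℕ) (z : Vec d)
    (h : ∀ t, j ≤ t → t < j + k → x t = y t) :
    chainB η x j z k = chainB η y j z k := by
  induction k with
  | zero => rfl
  | succ k ih =>
      show Bapp η (x (j + k)) _ = Bapp η (y (j + k)) _
      rw [h (j + k) (Nat.le_add_right _ _) (by omega),
        ih fun t ht1 ht2 => h t ht1 (by omega)]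

lemma continuous_Bapp (η : ℝ) : Continuous fun p : Vec d × Vec d => Bapp η p.1 p.2 := by
  unfold Bapp
  exact continuous_snd.sub
    (((continuous_fst.inner (𝕜 := ℝ) continuous_snd).smul continuous_fst).const_smul η)

lemma measurable_chainB {T : ℕ} (η : ℝ) (j k : ℕ) :
    Measurable (fun ω : (Fin T → Vec d) × Vec d => chainB η (ext0 ω.1) j ω.2 k) := by
  induction k with
  | zero => exact measurable_snd
  | succ k ih =>
      have hco : Measurable (fun ω : (Fin T → Vec d) × Vec d => ext0 ω.1 (j + k)) := by
        unfold ext0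
        by_cases h : j + k < T
        · simp only [dif_pos h]
          exact (measurable_pi_apply _).comp measurable_fst
        · simp only [dif_neg h]
          exact measurable_const
      exact ((continuous_Bapp η).measurable).comp (hco.prodMk ih)

end chain

section update
variable {d : ℕ} (ν : Measure (Vec d)) [IsProbabilityMeasure ν]

lemma pi_map_update (T : ℕ) (i : Fin T) :
    (Measure.pi fun _ : Fin T => ν) =
      ((ν.prod (Measure.pi fun _ : Fin T => ν)).map
        (fun p : Vec d × (Fin T → Vec d) => Function.update p.2 i p.1)) := by
  have hφ : Measurable (fun p : Vec d × (Fin T → Vec d) => Function.update p.2 i p.1) :=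
    measurable_update'.comp (measurable_snd.prodMk measurable_fst)
  refine Measure.pi_eq fun s hs => ?_
  rw [Measure.map_apply hφ (MeasurableSet.univ_pi hs)]
  have hpre : (fun p : Vec d × (Fin T → Vec d) => Function.update p.2 i p.1) ⁻¹'
      (Set.pi Set.univ s) = (s i) ×ˢ (Set.pi Set.univ fun t => if t = i then Set.univ else s t) := by
    ext p
    simp only [Set.mem_preimage, Set.mem_pi, Set.mem_univ, forall_true_left, Set.mem_prod]
    constructor
    · intro h
      refine ⟨by simpa using h i, fun t => ?_⟩
      by_cases ht : t = i
      · simp [ht]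
      · simpa [ht, Function.update_of_ne ht] using h t
    · rintro ⟨h1, h2⟩ t
      by_cases ht : t = i
      · subst ht; simpa using h1
      · have := h2 t
        simpa [ht, Function.update_of_ne ht] using this
  rw [hpre, Measure.prod_prod, Measure.pi_pi]
  have : ∀ t : Fin T, ν (if t = i then Set.univ else s t)
      = if t = i then 1 else ν (s t) := by
    intro t; by_cases ht : t = i <;> simp [ht]
  rw [Finset.prod_congr rfl fun t _ => this t]
  have h1 : (∏ t, if t = i then (1:ℝ≥0∞) else ν (s t))
      = ∏ t ∈ Finset.univ.erase i, ν (s t) := by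
    rw [← Finset.prod_erase (f := fun t => if t = i then (1:ℝ≥0∞) else ν (s t)) (a := i)
      Finset.univ (by simp)]
    exact Finset.prod_congr rfl fun t ht => by simp [Finset.ne_of_mem_erase ht]
  rw [h1, Finset.mul_prod_erase Finset.univ (fun t => ν (s t)) (Finset.mem_univ i)]

end update

section main
variable {d T j : ℕ}
variable (ν : Measure (Vec d)) [IsProbabilityMeasure ν]
variable (νz : Measure (Vec d)) [IsProbabilityMeasure νz]
variable (hmom : Integrable (fun x : Vec d => ‖x‖ ^ 2) ν)
variable (hmom4 : Integrable (fun x : Vec d => ‖x‖ ^ 4) ν)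
variable {H M4 : Matrix (Fin d) (Fin d) ℝ}
variable (hH : ∀ i k, H i k = ∫ x, x i * x k ∂ν)
variable (hM4 : ∀ i k, M4 i k = ∫ x, ‖x‖ ^ 2 * (x i * x k) ∂ν)
variable (hHherm : H.IsHermitian) {μ : ℝ} (hμdef : μ = lamMin hHherm) (hμ : 0 < μ)
variable {Rx : ℝ} (hRx : (Rx ^ 2 • H - M4).PosSemidef)
variable {η : ℝ} (hη0 : 0 < η) (hη : η < 1 / Rx ^ 2)

include hmom hmom4 hH hM4 hμdef hμ hRx hη0 hη in
lemma chain_bound (hd : 0 < d) (k : ℕ) (hk : j + k ≤ T) :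
    ∫⁻ ω, ENNReal.ofReal (‖chainB η (ext0 ω.1) j ω.2 k‖ ^ 2)
        ∂((Measure.pi fun _ : Fin T => ν).prod νz)
      ≤ ENNReal.ofReal (1 - η * μ) ^ k * ∫⁻ v, ENNReal.ofReal (‖v‖ ^ 2) ∂νz := by
  induction k with
  | zero =>
      rw [pow_zero, one_mul]
      have hmeas : Measurable fun ω : (Fin T → Vec d) × Vec d =>
          ENNReal.ofReal (‖ω.2‖ ^ 2) :=
        (measurable_snd.norm.pow_const 2).ennreal_ofReal
      simp only [chainB]
      rw [lintegral_prod _ hmeas.aemeasurable]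
      simp [measure_univ]
  | succ k ih =>
      have hk' : j + k < T := by omega
      have ihk := ih (by omega)
      set pp := (Measure.pi fun _ : Fin T => ν) with hppdef
      set i : Fin T := ⟨j + k, hk'⟩ with hidef
      set C : (Fin T → Vec d) × Vec d → Vec d :=
        fun w => chainB η (ext0 w.1) j w.2 k with hCdef
      have hC : Measurable C := measurable_chainB η j k
      have hφ : Measurable (fun p : Vec d × (Fin T → Vec d) => Function.update p.2 i p.1) :=
        measurable_update'.comp (measurable_snd.prodMk measurable_fst)
      have key : ∀ (a : Vec d) (f : Fin T → Vec d) (z : Vec d),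
          chainB η (ext0 (Function.update f i a)) j z (k + 1) = Bapp η a (C (f, z)) := by
        intro a f z
        show Bapp η (ext0 (Function.update f i a) (j + k)) _ = _
        have h1 : ext0 (Function.update f i a) (j + k) = a := by
          unfold ext0
          rw [dif_pos hk']
          exact Function.update_self i a f
        rw [h1]
        refine congrArg (Bapp η a) (chainB_congr η _ _ j k z fun t ht1 ht2 => ?_)
        unfold ext0
        have htT : t < T := by omega
        rw [dif_pos htT, dif_pos htT]
        exact Function.update_of_ne (Fin.ne_of_val_ne (show t ≠ j + k by omega)) _ _
      -- measure rewriting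
      have hmapeq : pp.prod νz = ((ν.prod pp).prod νz).map
          (Prod.map (fun p : Vec d × (Fin T → Vec d) => Function.update p.2 i p.1) id) := by
        rw [hppdef]
        conv_lhs => rw [pi_map_update ν T i, ← Measure.map_id (μ := νz)]
        exact Measure.map_prod_map _ _ hφ measurable_id
      have hF : Measurable fun ω : (Fin T → Vec d) × Vec d =>
          ENNReal.ofReal (‖chainB η (ext0 ω.1) j ω.2 (k + 1)‖ ^ 2) :=
        ((measurable_chainB η j (k + 1)).norm.pow_const 2).ennreal_ofReal
      have hg : Measurable fun p : Vec d × ((Fin T → Vec d) × Vec d) =>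
          ENNReal.ofReal (‖Bapp η p.1 (C p.2)‖ ^ 2) := by
        have hb : Measurable fun p : Vec d × ((Fin T → Vec d) × Vec d) => Bapp η p.1 (C p.2) :=
          ((continuous_Bapp η).measurable).comp (measurable_fst.prodMk (hC.comp measurable_snd))
        exact (hb.norm.pow_const 2).ennreal_ofReal
      rw [hmapeq, lintegral_map hF (hφ.prodMap measurable_id)]
      have hstep1 : ∫⁻ q : (Vec d × (Fin T → Vec d)) × Vec d,
          ENNReal.ofReal (‖chainB η (ext0
            (Prod.map (fun p : Vec d × (Fin T → Vec d) => Function.update p.2 i p.1) id q).1)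
            j (Prod.map (fun p : Vec d × (Fin T → Vec d) => Function.update p.2 i p.1) id q).2
            (k + 1)‖ ^ 2) ∂((ν.prod pp).prod νz)
          = ∫⁻ q : (Vec d × (Fin T → Vec d)) × Vec d,
            ENNReal.ofReal (‖Bapp η q.1.1 (C (q.1.2, q.2))‖ ^ 2) ∂((ν.prod pp).prod νz) := by
        refine lintegral_congr fun q => ?_
        rcases q with ⟨⟨a, f⟩, z⟩
        simp only [Prod.map, id]
        rw [key a f z]
      rw [hstep1]
      -- reassociate
      have hassoc : ∫⁻ q : (Vec d × (Fin T → Vec d)) × Vec d,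
          ENNReal.ofReal (‖Bapp η q.1.1 (C (q.1.2, q.2))‖ ^ 2) ∂((ν.prod pp).prod νz)
          = ∫⁻ p : Vec d × ((Fin T → Vec d) × Vec d),
            ENNReal.ofReal (‖Bapp η p.1 (C p.2)‖ ^ 2) ∂(ν.prod (pp.prod νz)) := by
        rw [← Measure.prodAssoc_prod, lintegral_map hg MeasurableEquiv.prodAssoc.measurable]
        rfl
      rw [hassoc]
      rw [lintegral_prod _ hg.aemeasurable]
      rw [lintegral_lintegral_swap hg.aemeasurable]
      have hinner : ∀ w : (Fin T → Vec d) × Vec d,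
          ∫⁻ a, ENNReal.ofReal (‖Bapp η a (C w)‖ ^ 2) ∂ν
            ≤ ENNReal.ofReal (1 - η * μ) * ENNReal.ofReal (‖C w‖ ^ 2) := by
        intro w
        have hint := integrable_Bapp_sq ν hmom hmom4 (η := η) (C w)
        rw [← ofReal_integral_eq_lintegral_ofReal hint
          (Filter.Eventually.of_forall fun x => sq_nonneg _)]
        calc ENNReal.ofReal (∫ x, ‖Bapp η x (C w)‖ ^ 2 ∂ν)
            ≤ ENNReal.ofReal ((1 - η * μ) * ‖C w‖ ^ 2) :=
              ENNReal.ofReal_le_ofReal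
                (one_step ν hmom hmom4 hH hM4 hHherm hμdef hRx hη0 hη hd (C w))
        _ = ENNReal.ofReal (1 - η * μ) * ENNReal.ofReal (‖C w‖ ^ 2) :=
              ENNReal.ofReal_mul (by
                have := eta_mu_lt_one ν hmom hmom4 hH hM4 hHherm hμdef hμ hRx hη0 hη hd
                linarith)
      calc ∫⁻ w, ∫⁻ a, ENNReal.ofReal (‖Bapp η a (C w)‖ ^ 2) ∂ν ∂(pp.prod νz)
          ≤ ∫⁻ w, ENNReal.ofReal (1 - η * μ) * ENNReal.ofReal (‖C w‖ ^ 2) ∂(pp.prod νz) :=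
            lintegral_mono hinner
      _ = ENNReal.ofReal (1 - η * μ) *
            ∫⁻ w, ENNReal.ofReal (‖C w‖ ^ 2) ∂(pp.prod νz) :=
            lintegral_const_mul _ ((hC.norm.pow_const 2).ennreal_ofReal)
      _ ≤ ENNReal.ofReal (1 - η * μ) *
            (ENNReal.ofReal (1 - η * μ) ^ k * ∫⁻ v, ENNReal.ofReal (‖v‖ ^ 2) ∂νz) :=
            mul_le_mul_right ihk _
      _ = ENNReal.ofReal (1 - η * μ) ^ (k + 1) * ∫⁻ v, ENNReal.ofReal (‖v‖ ^ 2) ∂νz := by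
            rw [pow_succ]
            ring

end main

/-- expectation version of Lemma A.3. Let `x_j, …, x_{T−1}` be i.i.d.
with `E[x xᵀ] = H`, smallest eigenvalue `μ > 0` and `E[‖x‖² x xᵀ] ⪯ R_x² H`, let
`B_t = I − η x_t x_tᵀ`, and let `z` be independent of all `B_t`. For `0 < η < 1/R_x²`,
`E‖B_{T−1} ⋯ B_j z‖² ≤ (1 − ημ)^{T−j} E‖z‖² ≤ e^{−ημ(T−j)} E‖z‖²`. -/
theorem chain_contraction_expectation
    (d T j : ℕ) (hd : 0 < d) (hjT : j ≤ T)
    (ν : Measure (Vec d)) [IsProbabilityMeasure ν]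
    (νz : Measure (Vec d)) [IsProbabilityMeasure νz]
    (hmom : Integrable (fun x : Vec d => ‖x‖ ^ 2) ν)
    (hmom4 : Integrable (fun x : Vec d => ‖x‖ ^ 4) ν)
    (hzmom : Integrable (fun v : Vec d => ‖v‖ ^ 2) νz)
    (H M4 : Matrix (Fin d) (Fin d) ℝ)
    (hH : ∀ i k, H i k = ∫ x, x i * x k ∂ν)
    (hM4 : ∀ i k, M4 i k = ∫ x, ‖x‖ ^ 2 * (x i * x k) ∂ν)
    (hHherm : H.IsHermitian) (μ : ℝ) (hμdef : μ = lamMin hHherm) (hμ : 0 < μ)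
    (Rx : ℝ) (hRx : (Rx ^ 2 • H - M4).PosSemidef)
    (η : ℝ) (hη0 : 0 < η) (hη : η < 1 / Rx ^ 2) :
    (∫ ω, ‖chainB η (ext0 ω.1) j ω.2 (T - j)‖ ^ 2
        ∂((Measure.pi fun _ : Fin T => ν).prod νz)) ≤
      (1 - η * μ) ^ (T - j) * ∫ v, ‖v‖ ^ 2 ∂νz ∧
    (1 - η * μ) ^ (T - j) * (∫ v, ‖v‖ ^ 2 ∂νz) ≤
      Real.exp (-(η * μ) * ((T - j : ℕ) : ℝ)) * ∫ v, ‖v‖ ^ 2 ∂νz := by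
  have hkn : j + (T - j) ≤ T := by omega
  have hb := chain_bound ν νz hmom hmom4 hH hM4 hHherm hμdef hμ hRx hη0 hη hd (T - j) hkn
  have hE0 : 0 ≤ ∫ v, ‖v‖ ^ 2 ∂νz := integral_nonneg fun v => sq_nonneg _
  have h1μ : 0 ≤ 1 - η * μ := by
    have := eta_mu_lt_one ν hmom hmom4 hH hM4 hHherm hμdef hμ hRx hη0 hη hd
    linarith
  constructor
  · have hmeasn : AEStronglyMeasurable
        (fun ω : (Fin T → Vec d) × Vec d => ‖chainB η (ext0 ω.1) j ω.2 (T - j)‖ ^ 2)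
        ((Measure.pi fun _ : Fin T => ν).prod νz) :=
      ((measurable_chainB η j (T - j)).norm.pow_const 2).aestronglyMeasurable
    rw [integral_eq_lintegral_of_nonneg_ae
      (Filter.Eventually.of_forall fun ω => sq_nonneg _) hmeasn]
    have hz : ∫⁻ v, ENNReal.ofReal (‖v‖ ^ 2) ∂νz = ENNReal.ofReal (∫ v, ‖v‖ ^ 2 ∂νz) :=
      (ofReal_integral_eq_lintegral_ofReal hzmom
        (Filter.Eventually.of_forall fun v => sq_nonneg _)).symm
    rw [hz] at hb
    have hb2 : (∫⁻ ω, ENNReal.ofReal (‖chainB η (ext0 ω.1) j ω.2 (T - j)‖ ^ 2)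
        ∂((Measure.pi fun _ : Fin T => ν).prod νz))
        ≤ ENNReal.ofReal ((1 - η * μ) ^ (T - j) * ∫ v, ‖v‖ ^ 2 ∂νz) := by
      rw [ENNReal.ofReal_mul (by positivity), ENNReal.ofReal_pow h1μ]
      exact hb
    exact ENNReal.toReal_le_of_le_ofReal (by positivity) hb2
  · have hexp : 1 - η * μ ≤ Real.exp (-(η * μ)) := by
      have := Real.add_one_le_exp (-(η * μ)); linarith
    have hpow : (1 - η * μ) ^ (T - j) ≤ Real.exp (-(η * μ) * ((T - j : ℕ) : ℝ)) := by
      calc (1 - η * μ) ^ (T - j) ≤ Real.exp (-(η * μ)) ^ (T - j) :=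
            pow_le_pow_left₀ h1μ hexp (T - j)
      _ = Real.exp (-(η * μ) * ((T - j : ℕ) : ℝ)) := by
            rw [← Real.exp_nat_mul, mul_comm]
    exact mul_le_mul_of_nonneg_right hpow hE0
end
end

section
/- Let x_0, …, x_{b−1} ∈ ℝ^d be i.i.d. random vectors with E[x xᵀ] = H and E[‖x‖₂² x xᵀ] ⪯ R_x²·H, and let B = I − (η/b)·Σ_{i=0}^{b−1} x_i x_iᵀ. If η ≤ b/(R_x² + (b−1)·‖H‖₂), then E[Bᵀ B] ⪯ I − η·H. -/
set_option autoImplicit false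

open MeasureTheory ProbabilityTheory Real Matrix
open scoped ENNReal NNReal RealInnerProductSpace BigOperators

noncomputable section

/-- Spectral (ℓ₂ operator) norm of a matrix. -/
def specNorm {n : ℕ} (A : Matrix (Fin n) (Fin n) ℝ) : ℝ :=
  ‖Matrix.toEuclideanCLM (𝕜 := ℝ) A‖

/-- The mini-batch matrix `B = I − (η/b) ∑_{i<b} x_i x_iᵀ`. -/
def Bmat {d : ℕ} (η : ℝ) (b : ℕ) (x : Fin b → Vec d) : Matrix (Fin d) (Fin d) ℝ :=
  1 - (η / (b : ℝ)) • ∑ i : Fin b, Matrix.vecMulVec (fun k => x i k) (fun k => x i k)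

/-! ### Auxiliary lemmas -/

section Aux
variable {d : ℕ}

lemma norm_sq_eq' (y : Vec d) : ‖y‖ ^ 2 = ∑ j, y j ^ 2 := by
  rw [EuclideanSpace.norm_eq, Real.sq_sqrt (by positivity)]
  simp [Real.norm_eq_abs, sq_abs]

lemma coord_abs_le' (y : Vec d) (i : Fin d) : |y i| ≤ ‖y‖ := by
  have h : y i ^ 2 ≤ ‖y‖ ^ 2 := by
    rw [norm_sq_eq']
    exact Finset.single_le_sum (fun j _ => sq_nonneg (y j)) (Finset.mem_univ i)
  have := Real.sqrt_le_sqrt h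
  simpa [Real.sqrt_sq_eq_abs, abs_of_nonneg (norm_nonneg y)] using this

lemma cont_coord' (i : Fin d) : Continuous fun y : Vec d => y i :=
  (EuclideanSpace.proj (𝕜 := ℝ) i).continuous

lemma transpose_eq_of_herm' {M : Matrix (Fin d) (Fin d) ℝ} (h : M.IsHermitian) : Mᵀ = M := by
  ext i j
  have h2 := congrFun (congrFun h.eq i) j
  simpa [Matrix.conjTranspose_apply] using h2

lemma dot_mulVec_eq' (u v : Fin d → ℝ) (M : Matrix (Fin d) (Fin d) ℝ) :
    u ⬝ᵥ (M *ᵥ v) = (Mᵀ *ᵥ u) ⬝ᵥ v := by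
  rw [Matrix.dotProduct_mulVec, Matrix.mulVec_transpose]

lemma quad_le_specNorm' (A : Matrix (Fin d) (Fin d) ℝ) (w : Fin d → ℝ) :
    w ⬝ᵥ (A *ᵥ w) ≤ specNorm A * (w ⬝ᵥ w) := by
  set w' : Vec d := (WithLp.equiv 2 _).symm w with hw'
  have h1 : ⟪w', Matrix.toEuclideanCLM (𝕜 := ℝ) A w'⟫ = w ⬝ᵥ (A *ᵥ w) := by
    rw [hw']
    simp [PiLp.inner_apply, dotProduct, mul_comm]
  have h2 : ⟪w', w'⟫ = w ⬝ᵥ w := by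
    rw [hw']
    simp only [PiLp.inner_apply, dotProduct]
    simp [mul_comm, sq]
  calc w ⬝ᵥ (A *ᵥ w) = ⟪w', Matrix.toEuclideanCLM (𝕜 := ℝ) A w'⟫ := h1.symm
    _ ≤ ‖w'‖ * ‖Matrix.toEuclideanCLM (𝕜 := ℝ) A w'‖ := real_inner_le_norm _ _
    _ ≤ ‖w'‖ * (‖Matrix.toEuclideanCLM (𝕜 := ℝ) A‖ * ‖w'‖) := by
        gcongr; exact (Matrix.toEuclideanCLM (𝕜 := ℝ) A).le_opNorm w'
    _ = specNorm A * ⟪w', w'⟫ := by rw [real_inner_self_eq_norm_sq]; unfold specNorm; ring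
    _ = specNorm A * (w ⬝ᵥ w) := by rw [h2]

lemma smul_posSemidef' {A : Matrix (Fin d) (Fin d) ℝ} (hA : A.PosSemidef) {c : ℝ} (hc : 0 ≤ c) :
    (c • A).PosSemidef := by
  refine Matrix.PosSemidef.of_dotProduct_mulVec_nonneg ?_ (fun x => ?_)
  · unfold Matrix.IsHermitian
    rw [Matrix.conjTranspose_smul, hA.1.eq]
    simp
  · rw [Matrix.smul_mulVec, dotProduct_smul, smul_eq_mul]
    exact mul_nonneg hc (hA.dotProduct_mulVec_nonneg x)

open scoped MatrixOrder in
lemma specNorm_smul_sub_sq_posSemidef' {H : Matrix (Fin d) (Fin d) ℝ} (hH : H.PosSemidef) :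
    (specNorm H • H - H * H).PosSemidef := by
  have hs : (CFC.sqrt H).PosSemidef := (CFC.sqrt_nonneg H).posSemidef
  set s := CFC.sqrt H with hsdef
  have hss : s * s = H := CFC.sqrt_mul_sqrt_self H hH.nonneg
  have hsym : sᵀ = s := transpose_eq_of_herm' hs.1
  refine Matrix.PosSemidef.of_dotProduct_mulVec_nonneg ?_ (fun x => ?_)
  · unfold Matrix.IsHermitian
    rw [Matrix.conjTranspose_sub, Matrix.conjTranspose_smul, Matrix.conjTranspose_mul,
      hH.1.eq]
    simp
  · have hstar : star x = x := by simp
    rw [hstar, Matrix.sub_mulVec, dotProduct_sub, Matrix.smul_mulVec,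
      dotProduct_smul, smul_eq_mul]
    have e1 : x ⬝ᵥ ((H * H) *ᵥ x) = (s *ᵥ x) ⬝ᵥ (H *ᵥ (s *ᵥ x)) := by
      have h' : H * H = s * (H * s) := by rw [← hss]; noncomm_ring
      rw [h', ← Matrix.mulVec_mulVec, ← Matrix.mulVec_mulVec, dot_mulVec_eq', hsym]
    have e2 : (s *ᵥ x) ⬝ᵥ (s *ᵥ x) = x ⬝ᵥ (H *ᵥ x) := by
      rw [dot_mulVec_eq', hsym, Matrix.mulVec_mulVec, hss, dotProduct_comm]
    have := quad_le_specNorm' H (s *ᵥ x)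
    rw [e2] at this
    rw [e1]
    linarith

end Aux

section Prods
variable {b : ℕ}

lemma prod_pick_one' (m : Fin b) (F : Fin b → ℝ) :
    (∏ j, if j = m then F j else 1) = F m := by
  rw [Finset.prod_ite_eq' Finset.univ m F]
  simp

lemma prod_pick_two' {m n : Fin b} (hmn : m ≠ n) (F G : Fin b → ℝ) :
    (∏ j, if j = m then F j else if j = n then G j else 1) = F m * G n := by
  rw [← Finset.mul_prod_erase _ _ (Finset.mem_univ m)]
  rw [if_pos rfl]
  congr 1
  rw [Finset.prod_congr rfl (fun j hj => by
    rw [if_neg (Finset.ne_of_mem_erase hj)])]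
  rw [Finset.prod_ite_eq' (Finset.univ.erase m) n G]
  simp [Finset.mem_erase, hmn.symm]

end Prods

section Integrals
variable {d b : ℕ} (ν : Measure (Vec d)) [IsProbabilityMeasure ν]

lemma pi_integral_single' (m : Fin b) (f : Vec d → ℝ) :
    (∫ x : Fin b → Vec d, f (x m) ∂Measure.pi (fun _ => ν)) = ∫ y, f y ∂ν := by
  letI : MeasureSpace (Vec d) := { toMeasurableSpace := inferInstance, volume := ν }
  haveI : IsProbabilityMeasure (volume : Measure (Vec d)) := ‹_›
  have hpi : Measure.pi (fun _ : Fin b => ν) = (volume : Measure (Fin b → Vec d)) :=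
    (MeasureTheory.volume_pi).symm
  rw [hpi]
  have h := MeasureTheory.integral_fintype_prod_eq_prod (𝕜 := ℝ) (ι := Fin b)
    (fun j (y : Vec d) => if j = m then f y else 1) (μ := fun _ => (volume : Measure (Vec d)))
  rw [← MeasureTheory.volume_pi] at h
  have h1 : (fun x : Fin b → Vec d => f (x m))
      = fun x => ∏ j, if j = m then f (x j) else 1 := by
    funext x; rw [prod_pick_one' m (fun j => f (x j))]
  have h2 : (∏ j, ∫ y : Vec d, if j = m then f y else 1) = ∫ y, f y := by
    rw [Finset.prod_congr rfl (fun j _ => show (∫ y : Vec d, if j = m then f y else 1)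
        = if j = m then ∫ y, f y else 1 by
      by_cases hj : j = m <;> simp [hj, measure_univ])]
    rw [prod_pick_one' m (fun _ => ∫ y, f y)]
  rw [h1, h, h2]
  rfl

lemma pi_integrable_single' (m : Fin b) {f : Vec d → ℝ}
    (hf : Integrable f ν) :
    Integrable (fun x : Fin b → Vec d => f (x m)) (Measure.pi (fun _ => ν)) := by
  letI : MeasureSpace (Vec d) := { toMeasurableSpace := inferInstance, volume := ν }
  haveI : IsProbabilityMeasure (volume : Measure (Vec d)) := ‹_›
  have hpi : Measure.pi (fun _ : Fin b => ν) = (volume : Measure (Fin b → Vec d)) :=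
    (MeasureTheory.volume_pi).symm
  rw [hpi]
  have h := MeasureTheory.Integrable.fintype_prod (𝕜 := ℝ) (ι := Fin b)
    (f := fun j (y : Vec d) => if j = m then f y else 1) (μ := fun _ => (volume : Measure (Vec d)))
    (fun j => by
      by_cases hj : j = m
      · simp only [if_pos hj]
        exact hf
      · simpa [hj] using integrable_const (1:ℝ))
  have h1 : (fun x : Fin b → Vec d => ∏ j, if j = m then f (x j) else 1)
      = fun x => f (x m) := by
    funext x; rw [prod_pick_one' m (fun j => f (x j))]
  rwa [h1] at h

lemma pi_integral_double' {m n : Fin b} (hmn : m ≠ n) (f g : Vec d → ℝ) :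
    (∫ x : Fin b → Vec d, f (x m) * g (x n) ∂Measure.pi (fun _ => ν))
      = (∫ y, f y ∂ν) * ∫ y, g y ∂ν := by
  letI : MeasureSpace (Vec d) := { toMeasurableSpace := inferInstance, volume := ν }
  haveI : IsProbabilityMeasure (volume : Measure (Vec d)) := ‹_›
  have hpi : Measure.pi (fun _ : Fin b => ν) = (volume : Measure (Fin b → Vec d)) :=
    (MeasureTheory.volume_pi).symm
  rw [hpi]
  have h := MeasureTheory.integral_fintype_prod_eq_prod (𝕜 := ℝ) (ι := Fin b)
    (fun j (y : Vec d) => if j = m then f y else if j = n then g y else 1)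
    (μ := fun _ => (volume : Measure (Vec d)))
  rw [← MeasureTheory.volume_pi] at h
  have h1 : (fun x : Fin b → Vec d => f (x m) * g (x n))
      = fun x => ∏ j, if j = m then f (x j) else if j = n then g (x j) else 1 := by
    funext x; rw [prod_pick_two' hmn (fun j => f (x j)) (fun j => g (x j))]
  have h2 : (∏ j, ∫ y : Vec d, if j = m then f y else if j = n then g y else 1)
      = (∫ y, f y) * ∫ y, g y := by
    rw [Finset.prod_congr rfl (fun j _ =>
      show (∫ y : Vec d, if j = m then f y else if j = n then g y else 1)
        = if j = m then ∫ y, f y else if j = n then ∫ y, g y else 1 by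
      by_cases hj : j = m
      · simp [hj]
      · by_cases hj' : j = n <;> simp [hj, hj', hmn.symm, measure_univ])]
    rw [prod_pick_two' hmn (fun _ => ∫ y, f y) (fun _ => ∫ y, g y)]
  rw [h1, h, h2]
  rfl

lemma pi_integrable_double' {m n : Fin b} (hmn : m ≠ n) {f g : Vec d → ℝ}
    (hf : Integrable f ν) (hg : Integrable g ν) :
    Integrable (fun x : Fin b → Vec d => f (x m) * g (x n)) (Measure.pi (fun _ => ν)) := by
  letI : MeasureSpace (Vec d) := { toMeasurableSpace := inferInstance, volume := ν }
  haveI : IsProbabilityMeasure (volume : Measure (Vec d)) := ‹_›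
  have hpi : Measure.pi (fun _ : Fin b => ν) = (volume : Measure (Fin b → Vec d)) :=
    (MeasureTheory.volume_pi).symm
  rw [hpi]
  have h := MeasureTheory.Integrable.fintype_prod (𝕜 := ℝ) (ι := Fin b)
    (f := fun j (y : Vec d) => if j = m then f y else if j = n then g y else 1)
    (μ := fun _ => (volume : Measure (Vec d)))
    (fun j => by
      by_cases hj : j = m
      · simp only [if_pos hj]
        exact hf
      · by_cases hj' : j = n
        · simp only [if_neg hj, if_pos hj']
          exact hg
        · simpa [hj, hj'] using integrable_const (1:ℝ))
  have h1 : (fun x : Fin b → Vec d =>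
      ∏ j, if j = m then f (x j) else if j = n then g (x j) else 1)
      = fun x => f (x m) * g (x n) := by
    funext x; rw [prod_pick_two' hmn (fun j => f (x j)) (fun j => g (x j))]
  rwa [h1] at h

lemma int2' (hmom : Integrable (fun y : Vec d => ‖y‖ ^ 2) ν) (i k : Fin d) :
    Integrable (fun y : Vec d => y i * y k) ν := by
  refine hmom.mono (((cont_coord' i).mul (cont_coord' k)).aestronglyMeasurable)
    (ae_of_all _ fun y => ?_)
  rw [Real.norm_eq_abs, Real.norm_eq_abs, abs_mul, abs_of_nonneg (sq_nonneg ‖y‖), sq]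
  exact mul_le_mul (coord_abs_le' y i) (coord_abs_le' y k) (abs_nonneg _) (norm_nonneg _)

lemma int4' (hmom4 : Integrable (fun y : Vec d => ‖y‖ ^ 4) ν) (i k : Fin d) :
    Integrable (fun y : Vec d => ‖y‖ ^ 2 * (y i * y k)) ν := by
  refine hmom4.mono (((continuous_norm.pow 2).mul
    ((cont_coord' i).mul (cont_coord' k))).aestronglyMeasurable) (ae_of_all _ fun y => ?_)
  rw [Real.norm_eq_abs, Real.norm_eq_abs, abs_mul, abs_of_nonneg (sq_nonneg ‖y‖),
    abs_of_nonneg (by positivity : (0:ℝ) ≤ ‖y‖ ^ 4), abs_mul]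
  calc ‖y‖ ^ 2 * (|y i| * |y k|) ≤ ‖y‖ ^ 2 * (‖y‖ * ‖y‖) := by
        gcongr
        · exact coord_abs_le' y i
        · exact coord_abs_le' y k
    _ = ‖y‖ ^ 4 := by ring

lemma H_posSemidef' (hmom : Integrable (fun y : Vec d => ‖y‖ ^ 2) ν)
    (H : Matrix (Fin d) (Fin d) ℝ) (hH : ∀ i k, H i k = ∫ x, x i * x k ∂ν) :
    H.PosSemidef := by
  have hsymm : ∀ i k, H i k = H k i := fun i k => by
    rw [hH i k, hH k i]
    exact integral_congr_ae (Filter.Eventually.of_forall fun y => mul_comm _ _)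
  refine Matrix.PosSemidef.of_dotProduct_mulVec_nonneg ?_ ?_
  · ext i k
    rw [Matrix.conjTranspose_apply, star_trivial]
    exact (hsymm i k).symm
  · intro v
    have hstar : star v = v := by simp
    rw [hstar]
    have e1 : v ⬝ᵥ (H *ᵥ v) = ∑ i, ∑ k, (v i * v k) * H i k := by
      simp only [dotProduct, Matrix.mulVec, Finset.mul_sum]
      exact Finset.sum_congr rfl fun i _ => Finset.sum_congr rfl fun k _ => by ring
    rw [e1]
    have e2 : ∀ i k : Fin d, (v i * v k) * H i k = ∫ y, (v i * v k) * (y i * y k) ∂ν := by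
      intro i k
      rw [hH i k, ← integral_const_mul]
    rw [Finset.sum_congr rfl fun i _ => Finset.sum_congr rfl fun k _ => e2 i k]
    have e3 : ∀ i, (∑ k, ∫ y, (v i * v k) * (y i * y k) ∂ν)
        = ∫ y, ∑ k, (v i * v k) * (y i * y k) ∂ν :=
      fun i => (integral_finset_sum _ (fun k _ => ((int2' ν hmom i k).const_mul _))).symm
    rw [Finset.sum_congr rfl fun i _ => e3 i]
    rw [← integral_finset_sum _ (fun i _ =>
      integrable_finset_sum _ (fun k _ => (int2' ν hmom i k).const_mul _))]
    refine integral_nonneg fun y => ?_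
    have e4 : ∑ i, ∑ k, (v i * v k) * (y i * y k) = (∑ i, v i * y i) ^ 2 := by
      rw [sq, Finset.sum_mul_sum]
      exact Finset.sum_congr rfl fun i _ => Finset.sum_congr rfl fun k _ => by ring
    rw [e4]
    exact sq_nonneg _

end Integrals

section BmatSec
variable {d b : ℕ}

lemma BtB_eq' (η : ℝ) (x : Fin b → Vec d) :
    (Bmat η b x)ᵀ * Bmat η b x =
      1 - (2 * (η / (b:ℝ))) • (∑ m : Fin b, Matrix.vecMulVec (fun k => x m k) (fun k => x m k))
        + ((η / (b:ℝ)) * (η / (b:ℝ))) •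
          ((∑ m : Fin b, Matrix.vecMulVec (fun k => x m k) (fun k => x m k)) *
           (∑ m : Fin b, Matrix.vecMulVec (fun k => x m k) (fun k => x m k))) := by
  set c := η / (b:ℝ)
  set S := ∑ m : Fin b, Matrix.vecMulVec (fun k => x m k) (fun k => x m k) with hS
  have hSsym : Sᵀ = S := by
    ext i j
    simp [hS, Matrix.transpose_apply, Matrix.sum_apply, Matrix.vecMulVec_apply, mul_comm]
  have hBT : (Bmat η b x)ᵀ = Bmat η b x := by
    unfold Bmat
    rw [Matrix.transpose_sub, Matrix.transpose_one, Matrix.transpose_smul, hSsym]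
  rw [hBT]
  unfold Bmat
  rw [sub_mul, mul_sub, mul_sub]
  simp only [Matrix.smul_mul, Matrix.mul_smul, mul_one, one_mul, smul_smul]
  rw [two_mul, add_smul]
  abel

lemma BtB_entry' (η : ℝ) (x : Fin b → Vec d) (i k : Fin d) :
    ((Bmat η b x)ᵀ * Bmat η b x) i k =
      (1 : Matrix (Fin d) (Fin d) ℝ) i k
      - (2 * (η / (b:ℝ))) * (∑ m, x m i * x m k)
      + ((η / (b:ℝ)) * (η / (b:ℝ))) *
          ∑ m : Fin b, ∑ n : Fin b, ∑ j, (x m i * x m j) * (x n j * x n k) := by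
  rw [BtB_eq']
  rw [Matrix.add_apply, Matrix.sub_apply, Matrix.smul_apply, Matrix.smul_apply]
  congr 1
  · congr 1
    simp [Matrix.sum_apply, Matrix.vecMulVec_apply]
  · rw [smul_eq_mul]
    congr 1
    have hSapp : ∀ p q : Fin d,
        (∑ m : Fin b, Matrix.vecMulVec (fun k => x m k) (fun k => x m k)) p q
          = ∑ m, x m p * x m q := by
      intro p q; simp [Matrix.sum_apply, Matrix.vecMulVec_apply]
    rw [Matrix.mul_apply]
    calc ∑ j, (∑ m : Fin b, Matrix.vecMulVec (fun k => x m k) (fun k => x m k)) i j *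
            (∑ m : Fin b, Matrix.vecMulVec (fun k => x m k) (fun k => x m k)) j k
        = ∑ j, (∑ m, x m i * x m j) * (∑ n, x n j * x n k) := by simp_rw [hSapp]
      _ = ∑ j, ∑ m : Fin b, ∑ n : Fin b, (x m i * x m j) * (x n j * x n k) := by
          simp_rw [Finset.sum_mul_sum]
      _ = ∑ m : Fin b, ∑ n : Fin b, ∑ j, (x m i * x m j) * (x n j * x n k) := by
          rw [Finset.sum_comm]
          exact Finset.sum_congr rfl (fun m _ => Finset.sum_comm)

end BmatSec

/-- Lemma B.3 of the paper: for i.i.d. `x_0, …, x_{b−1}` with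
`E[x xᵀ] = H` and `E[‖x‖² x xᵀ] ⪯ R_x² H`, and `B = I − (η/b) ∑ x_i x_iᵀ`, if
`η ≤ b/(R_x² + (b−1)‖H‖₂)` then `E[Bᵀ B] ⪯ I − η H`. -/
theorem minibatch_contraction
    (d b : ℕ) (hd : 0 < d) (hb : 0 < b)
    (ν : Measure (Vec d)) [IsProbabilityMeasure ν]
    (hmom : Integrable (fun x : Vec d => ‖x‖ ^ 2) ν)
    (hmom4 : Integrable (fun x : Vec d => ‖x‖ ^ 4) ν)
    (H M4 EB : Matrix (Fin d) (Fin d) ℝ)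
    (hH : ∀ i k, H i k = ∫ x, x i * x k ∂ν)
    (hM4 : ∀ i k, M4 i k = ∫ x, ‖x‖ ^ 2 * (x i * x k) ∂ν)
    (Rx : ℝ) (hRx : (Rx ^ 2 • H - M4).PosSemidef)
    (η : ℝ) (hη0 : 0 < η)
    (hEB : ∀ i k, EB i k =
      ∫ x, ((Bmat η b x)ᵀ * Bmat η b x) i k ∂(Measure.pi fun _ : Fin b => ν))
    (hη : η ≤ (b : ℝ) / (Rx ^ 2 + ((b : ℝ) - 1) * specNorm H)) :
    ((1 : Matrix (Fin d) (Fin d) ℝ) - η • H - EB).PosSemidef := by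
  have hb0 : (0:ℝ) < (b:ℝ) := Nat.cast_pos.mpr hb
  have hb1 : (1:ℝ) ≤ (b:ℝ) := Nat.one_le_cast.mpr hb
  have hI2 : ∀ i k : Fin d, Integrable (fun y : Vec d => y i * y k) ν := int2' ν hmom
  have hI4 : ∀ i k : Fin d, Integrable (fun y : Vec d => ‖y‖ ^ 2 * (y i * y k)) ν :=
    int4' ν hmom4
  -- diagonal rewriting of the inner triple sum
  have hdiag : ∀ (i k : Fin d) (m : Fin b),
      (fun x : Fin b → Vec d => ∑ j, (x m i * x m j) * (x m j * x m k))
        = fun x => (fun y : Vec d => ‖y‖ ^ 2 * (y i * y k)) (x m) := by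
    intro i k m
    funext x
    show _ = ‖x m‖ ^ 2 * (x m i * x m k)
    rw [norm_sq_eq', Finset.sum_mul]
    exact Finset.sum_congr rfl fun j _ => by ring
  have hint : ∀ (i k : Fin d) (m n : Fin b), Integrable
      (fun x : Fin b → Vec d => ∑ j, (x m i * x m j) * (x n j * x n k))
      (Measure.pi fun _ : Fin b => ν) := by
    intro i k m n
    by_cases hmn : m = n
    · subst hmn
      rw [hdiag i k m]
      exact pi_integrable_single' ν m (hI4 i k)
    · exact integrable_finset_sum _ (fun j _ =>
        pi_integrable_double' ν hmn (hI2 i j) (hI2 j k))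
  have hval : ∀ (i k : Fin d) (m n : Fin b),
      (∫ x, ∑ j, (x m i * x m j) * (x n j * x n k) ∂(Measure.pi fun _ : Fin b => ν))
        = if m = n then M4 i k else (H * H) i k := by
    intro i k m n
    by_cases hmn : m = n
    · subst hmn
      rw [if_pos rfl, hdiag i k m,
        pi_integral_single' ν m (fun y : Vec d => ‖y‖ ^ 2 * (y i * y k))]
      exact (hM4 i k).symm
    · rw [if_neg hmn,
        integral_finset_sum _ (fun j _ => pi_integrable_double' ν hmn (hI2 i j) (hI2 j k)),
        Matrix.mul_apply]
      exact Finset.sum_congr rfl fun j _ => by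
        rw [pi_integral_double' ν hmn (fun y : Vec d => y i * y j) (fun y : Vec d => y j * y k),
          ← hH i j, ← hH j k]
  -- value of EB entries
  have hEBval : ∀ i k, EB i k =
      (1 : Matrix (Fin d) (Fin d) ℝ) i k - 2 * (η / (b:ℝ)) * ((b:ℝ) * H i k)
        + (η / (b:ℝ)) * (η / (b:ℝ)) *
            ((b:ℝ) * M4 i k + ((b:ℝ) * (b:ℝ) - (b:ℝ)) * (H * H) i k) := by
    intro i k
    rw [hEB i k]
    have hexp : (fun x : Fin b → Vec d => ((Bmat η b x)ᵀ * Bmat η b x) i k)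
        = fun x => (1 : Matrix (Fin d) (Fin d) ℝ) i k
          - (2 * (η / (b:ℝ))) * (∑ m, x m i * x m k)
          + ((η / (b:ℝ)) * (η / (b:ℝ))) *
              ∑ m : Fin b, ∑ n : Fin b, ∑ j, (x m i * x m j) * (x n j * x n k) :=
      funext fun x => BtB_entry' η x i k
    rw [hexp]
    have i1 : Integrable (fun x : Fin b → Vec d => ∑ m, x m i * x m k)
        (Measure.pi fun _ : Fin b => ν) :=
      integrable_finset_sum _ (fun m _ => pi_integrable_single' ν m (hI2 i k))
    have i2 : Integrable (fun x : Fin b → Vec d =>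
        ∑ m : Fin b, ∑ n : Fin b, ∑ j, (x m i * x m j) * (x n j * x n k))
        (Measure.pi fun _ : Fin b => ν) :=
      integrable_finset_sum _ (fun m _ => integrable_finset_sum _ (fun n _ => hint i k m n))
    have ha : Integrable (fun x : Fin b → Vec d =>
        (1 : Matrix (Fin d) (Fin d) ℝ) i k - 2 * (η / (b:ℝ)) * ∑ m, x m i * x m k)
        (Measure.pi fun _ : Fin b => ν) :=
      (integrable_const _).sub (i1.const_mul _)
    have hb2 : Integrable (fun x : Fin b → Vec d =>
        (η / (b:ℝ)) * (η / (b:ℝ)) *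
          ∑ m : Fin b, ∑ n : Fin b, ∑ j, (x m i * x m j) * (x n j * x n k))
        (Measure.pi fun _ : Fin b => ν) :=
      i2.const_mul _
    rw [integral_add ha hb2,
      integral_sub (integrable_const _) (i1.const_mul _), integral_const,
      integral_const_mul, integral_const_mul]
    have v1 : (∫ x, ∑ m, x m i * x m k ∂(Measure.pi fun _ : Fin b => ν)) = (b:ℝ) * H i k := by
      rw [integral_finset_sum _ (fun m _ => pi_integrable_single' ν m (hI2 i k))]
      rw [Finset.sum_congr rfl (fun m _ => by
        rw [pi_integral_single' ν m (fun y : Vec d => y i * y k), ← hH i k])]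
      rw [Finset.sum_const, Finset.card_univ, Fintype.card_fin, nsmul_eq_mul]
    have v2 : (∫ x, ∑ m : Fin b, ∑ n : Fin b, ∑ j, (x m i * x m j) * (x n j * x n k)
          ∂(Measure.pi fun _ : Fin b => ν))
        = (b:ℝ) * M4 i k + ((b:ℝ) * (b:ℝ) - (b:ℝ)) * (H * H) i k := by
      rw [integral_finset_sum _ (fun m _ => integrable_finset_sum _ (fun n _ => hint i k m n))]
      rw [Finset.sum_congr rfl (fun m _ =>
        integral_finset_sum _ (fun n _ => hint i k m n))]
      rw [Finset.sum_congr rfl (fun m _ => Finset.sum_congr rfl (fun n _ => hval i k m n))]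
      have inner : ∀ m : Fin b, (∑ n : Fin b, if m = n then M4 i k else (H * H) i k)
          = (H * H) i k * (b:ℝ) + (M4 i k - (H * H) i k) := by
        intro m
        rw [Finset.sum_congr rfl (fun n _ =>
          show (if m = n then M4 i k else (H * H) i k)
            = (H * H) i k + (if m = n then M4 i k - (H * H) i k else 0) by
          by_cases h : m = n <;> simp [h])]
        rw [Finset.sum_add_distrib, Finset.sum_const, Finset.sum_ite_eq, Finset.card_univ,
          Fintype.card_fin, nsmul_eq_mul]
        simp [mul_comm]
      rw [Finset.sum_congr rfl (fun m _ => inner m), Finset.sum_const, Finset.card_univ,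
        Fintype.card_fin, nsmul_eq_mul]
      ring
    rw [v1, v2]
    simp [measure_univ]
  -- positivity pieces
  have hHpsd : H.PosSemidef := H_posSemidef' ν hmom H hH
  have hnn : (0:ℝ) ≤ specNorm H := norm_nonneg _
  have hC0 : 0 ≤ Rx ^ 2 + ((b:ℝ) - 1) * specNorm H :=
    add_nonneg (sq_nonneg _) (mul_nonneg (by linarith) hnn)
  have hCpos : 0 < Rx ^ 2 + ((b:ℝ) - 1) * specNorm H := by
    rcases hC0.lt_or_eq with h | h
    · exact h
    · exfalso
      rw [← h, div_zero] at hη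
      linarith
  have hηC : η * (Rx ^ 2 + ((b:ℝ) - 1) * specNorm H) ≤ (b:ℝ) := by
    rw [le_div_iff₀ hCpos] at hη
    exact hη
  have hα : 0 ≤ η - (η ^ 2 / (b:ℝ)) * (Rx ^ 2 + ((b:ℝ) - 1) * specNorm H) := by
    have e : η - (η ^ 2 / (b:ℝ)) * (Rx ^ 2 + ((b:ℝ) - 1) * specNorm H)
        = (η / (b:ℝ)) * ((b:ℝ) - η * (Rx ^ 2 + ((b:ℝ) - 1) * specNorm H)) := by
      field_simp
    rw [e]
    exact mul_nonneg (div_nonneg hη0.le hb0.le) (by linarith)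
  have hdecomp : (1 : Matrix (Fin d) (Fin d) ℝ) - η • H - EB
      = (η ^ 2 / (b:ℝ)) • (Rx ^ 2 • H - M4)
        + (η ^ 2 * ((b:ℝ) - 1) / (b:ℝ)) • (specNorm H • H - H * H)
        + (η - (η ^ 2 / (b:ℝ)) * (Rx ^ 2 + ((b:ℝ) - 1) * specNorm H)) • H := by
    ext i k
    simp only [Matrix.sub_apply, Matrix.add_apply, Matrix.smul_apply, smul_eq_mul, hEBval i k]
    field_simp
    ring
  rw [hdecomp]
  exact ((smul_posSemidef' hRx (by positivity)).add
    (smul_posSemidef' (specNorm_smul_sub_sq_posSemidef' hHpsd)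
      (div_nonneg (mul_nonneg (sq_nonneg _) (by linarith)) hb0.le))).add
    (smul_posSemidef' hHpsd hα)
end
end
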